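/- Let m ≥ 1 be an integer, μ > 0 real, and P_μ^m(η) = (1−μ)(2−μ)(3/2−μ) + (m+1)μ(1−μ)(13/2−7μ)η + 3(m+1)(m+2)(3/2−2μ)μ²η² + (m+1)(m+2)(m+3)μ³η³. For m ≥ 6, all complex roots of P_μ^m lie in the closed half-plane {η ∈ ℂ : Re η ≤ 1/2} for every μ > 0. For 1 ≤ m ≤ 5, all complex roots of P_μ^m lie in {Re η ≤ 1/2} if and only if 0 < μ ≤ μ_m, where μ_m is the unique positive root of q_m(μ) = P_μ^m(1/2). -/

import Mathlib

set_option maxHeartbeats 1000000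


/-- The representative polynomial `P_μ^m` of type `IV₃` (complex variable). -/
noncomputable def PIV3c (m : ℕ) (μ : ℝ) (η : ℂ) : ℂ :=
  (1 - (μ : ℂ)) * (2 - (μ : ℂ)) * (3 / 2 - (μ : ℂ)) +
    ((m : ℂ) + 1) * (μ : ℂ) * (1 - (μ : ℂ)) * (13 / 2 - 7 * (μ : ℂ)) * η +
    3 * ((m : ℂ) + 1) * ((m : ℂ) + 2) * (3 / 2 - 2 * (μ : ℂ)) * (μ : ℂ) ^ 2 * η ^ 2 +
    ((m : ℂ) + 1) * ((m : ℂ) + 2) * ((m : ℂ) + 3) * (μ : ℂ) ^ 3 * η ^ 3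

/-- The representative polynomial `P_μ^m` of type `IV₃` (real variable). -/
noncomputable def PIV3 (m : ℕ) (μ η : ℝ) : ℝ :=
  (1 - μ) * (2 - μ) * (3 / 2 - μ) +
    ((m : ℝ) + 1) * μ * (1 - μ) * (13 / 2 - 7 * μ) * η +
    3 * ((m : ℝ) + 1) * ((m : ℝ) + 2) * (3 / 2 - 2 * μ) * μ ^ 2 * η ^ 2 +
    ((m : ℝ) + 1) * ((m : ℝ) + 2) * ((m : ℝ) + 3) * μ ^ 3 * η ^ 3

/-- `q_m(μ) = P_μ^m(1/2)` for type `IV₃`. -/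
noncomputable def qIV3 (m : ℕ) (μ : ℝ) : ℝ := PIV3 m μ (1 / 2)

/-- A root of a real monic quadratic with nonnegative coefficients has `re ≤ 0`. -/
lemma quad_root_re (s t : ℝ) (hs : 0 ≤ s) (ht : 0 ≤ t) (z : ℂ)
    (hz : z ^ 2 + (s : ℂ) * z + (t : ℂ) = 0) : z.re ≤ 0 := by
  have h1 : (z ^ 2 + (s : ℂ) * z + (t : ℂ)).re = 0 := by rw [hz]; rfl
  have h2 : (z ^ 2 + (s : ℂ) * z + (t : ℂ)).im = 0 := by rw [hz]; rfl
  simp [Complex.add_re, Complex.add_im, Complex.mul_re, Complex.mul_im, pow_two] at h1 h2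
  rcases eq_or_ne z.im 0 with hy | hy
  · rw [hy] at h1
    by_contra hx
    push_neg at hx
    nlinarith [mul_pos hx hx, mul_nonneg hs hx.le]
  · have h2' : z.im * (2 * z.re + s) = 0 := by ring_nf; ring_nf at h2; linarith
    have := (mul_eq_zero.1 h2').resolve_left hy
    linarith

/-- A real monic cubic has a real root. -/
lemma cubic_exists_root (b c d : ℝ) : ∃ r : ℝ, r ^ 3 + b * r ^ 2 + c * r + d = 0 := by
  set f : ℝ → ℝ := fun x => x ^ 3 + b * x ^ 2 + c * x + d with hf
  set M : ℝ := 1 + |b| + |c| + |d| with hM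
  have hM1 : 1 ≤ M := by
    have := abs_nonneg b; have := abs_nonneg c; have := abs_nonneg d; simp [hM]; linarith
  have hb1 := le_abs_self b; have hb2 := neg_abs_le b
  have hc1 := le_abs_self c; have hc2 := neg_abs_le c
  have hd1 := le_abs_self d; have hd2 := neg_abs_le d
  have hfm : f (-M) ≤ 0 := by
    simp only [hf]
    nlinarith [sq_nonneg M, mul_le_mul_of_nonneg_right hb1 (sq_nonneg M),
      mul_le_mul_of_nonneg_right hc1 (mul_pos (by linarith : (0:ℝ) < M) (by linarith : (0:ℝ) < M)).le,
      mul_le_mul_of_nonneg_left hM1 (abs_nonneg c), mul_le_mul_of_nonneg_left hM1 (abs_nonneg d)]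
  have hfM : 0 ≤ f M := by
    simp only [hf]
    nlinarith [sq_nonneg M, mul_le_mul_of_nonneg_right hb2 (sq_nonneg M),
      mul_le_mul_of_nonneg_right hc2 (mul_pos (by linarith : (0:ℝ) < M) (by linarith : (0:ℝ) < M)).le,
      mul_le_mul_of_nonneg_left hM1 (abs_nonneg c), mul_le_mul_of_nonneg_left hM1 (abs_nonneg d)]
  have hcont : ContinuousOn f (Set.Icc (-M) M) := by
    apply Continuous.continuousOn; simp only [hf]; continuity
  have hsub := intermediate_value_Icc (by linarith : (-M : ℝ) ≤ M) hcont
  have h0 : (0 : ℝ) ∈ Set.Icc (f (-M)) (f M) := ⟨hfm, hfM⟩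
  obtain ⟨r, -, hr⟩ := hsub h0
  exact ⟨r, hr⟩

/-- Routh–Hurwitz type criterion for a real monic cubic (closed half-plane). -/
lemma cubic_halfplane (b c d : ℝ) :
    (∀ z : ℂ, z ^ 3 + (b : ℂ) * z ^ 2 + (c : ℂ) * z + (d : ℂ) = 0 → z.re ≤ 0) ↔
      (0 ≤ b ∧ 0 ≤ c ∧ 0 ≤ d ∧ d ≤ b * c) := by
  obtain ⟨r₀, hr₀⟩ := cubic_exists_root b c d
  obtain ⟨s, hs⟩ : ∃ s : ℝ, s = b + r₀ := ⟨_, rfl⟩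
  obtain ⟨t, ht⟩ : ∃ t : ℝ, t = c + b * r₀ + r₀ ^ 2 := ⟨_, rfl⟩
  have hrC : (r₀ : ℂ) ^ 3 + (b : ℂ) * (r₀ : ℂ) ^ 2 + (c : ℂ) * (r₀ : ℂ) + (d : ℂ) = 0 := by
    exact_mod_cast hr₀
  have hfac : ∀ z : ℂ, z ^ 3 + (b : ℂ) * z ^ 2 + (c : ℂ) * z + (d : ℂ)
      = (z - (r₀ : ℂ)) * (z ^ 2 + (s : ℂ) * z + (t : ℂ)) := by
    intro z
    rw [hs, ht]
    push_cast
    linear_combination hrC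
  have hdt : r₀ * t = -d := by rw [ht]; linear_combination hr₀
  have hkey : b * c - d = s * (t - r₀ * b) := by rw [hs, ht]; linear_combination -hr₀
  constructor
  · intro H
    have hr0 : r₀ ≤ 0 := by
      have := H (r₀ : ℂ) hrC
      simpa using this
    have hst : 0 ≤ s ∧ 0 ≤ t := by
      rcases le_or_gt (s ^ 2 - 4 * t) 0 with hdisc | hdisc
      · set v : ℝ := Real.sqrt (t - s ^ 2 / 4) with hv
        have hv2 : v ^ 2 = t - s ^ 2 / 4 := Real.sq_sqrt (by linarith)
        have hv2C : (v : ℂ) ^ 2 = (t : ℂ) - (s : ℂ) ^ 2 / 4 := by exact_mod_cast hv2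
        set z : ℂ := -(s : ℂ) / 2 + (v : ℂ) * Complex.I with hz
        have hq : z ^ 2 + (s : ℂ) * z + (t : ℂ) = 0 := by
          rw [hz]
          linear_combination (v : ℂ) ^ 2 * Complex.I_sq - hv2C
        have hroot : z ^ 3 + (b : ℂ) * z ^ 2 + (c : ℂ) * z + (d : ℂ) = 0 := by
          rw [hfac, hq, mul_zero]
        have hre := H z hroot
        have : z.re = -s / 2 := by rw [hz]; simp
        have hs0 : 0 ≤ s := by rw [this] at hre; linarith
        refine ⟨hs0, by nlinarith [sq_nonneg s]⟩
      · set u : ℝ := Real.sqrt (s ^ 2 - 4 * t) with hu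
        have hu0 : 0 ≤ u := Real.sqrt_nonneg _
        have hu2 : u ^ 2 = s ^ 2 - 4 * t := Real.sq_sqrt (by linarith)
        set x : ℝ := (-s + u) / 2 with hx
        have hqx : x ^ 2 + s * x + t = 0 := by rw [hx]; linear_combination hu2 / 4
        have hqC : (x : ℂ) ^ 2 + (s : ℂ) * (x : ℂ) + (t : ℂ) = 0 := by exact_mod_cast hqx
        have hroot : (x:ℂ) ^ 3 + (b : ℂ) * (x:ℂ) ^ 2 + (c : ℂ) * (x:ℂ) + (d : ℂ) = 0 := by
          rw [hfac, hqC, mul_zero]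
        have hre := H (x : ℂ) hroot
        have hx0 : x ≤ 0 := by simpa using hre
        have hus : u ≤ s := by rw [hx] at hx0; linarith
        have hs0 : 0 ≤ s := le_trans hu0 hus
        have ht0 : 0 ≤ t := by nlinarith [mul_self_le_mul_self hu0 hus]
        exact ⟨hs0, ht0⟩
    obtain ⟨hs0, ht0⟩ := hst
    have hb0 : 0 ≤ b := by linarith
    have hc0 : 0 ≤ c := by nlinarith [mul_nonneg hs0 (neg_nonneg.2 hr0)]
    have hd0 : 0 ≤ d := by nlinarith [mul_nonneg ht0 (neg_nonneg.2 hr0)]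
    refine ⟨hb0, hc0, hd0, ?_⟩
    nlinarith [mul_nonneg hs0 (add_nonneg ht0 (mul_nonneg (neg_nonneg.2 hr0) hb0))]
  · rintro ⟨hb, hc, hd, hbc⟩
    have hr0 : r₀ ≤ 0 := by
      by_contra h
      push_neg at h
      nlinarith [mul_pos (mul_pos h h) h, mul_nonneg hb (mul_pos h h).le, mul_nonneg hc h.le]
    have ht0 : 0 ≤ t := by
      by_contra h
      push_neg at h
      rcases hr0.lt_or_eq with h' | h'
      · nlinarith [mul_pos_of_neg_of_neg h' h]
      · rw [ht, h'] at h; norm_num at h; linarith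
    have hs0 : 0 ≤ s := by
      by_contra h
      push_neg at h
      have h1 : 0 ≤ t - r₀ * b := by nlinarith [mul_nonneg (neg_nonneg.2 hr0) hb]
      have h2 : t - r₀ * b ≤ 0 := by
        by_contra hX
        push_neg at hX
        nlinarith [mul_neg_of_neg_of_pos h hX]
      have ht0' : t = 0 := by nlinarith [mul_nonneg (neg_nonneg.2 hr0) hb]
      have hrb : r₀ * b = 0 := by linarith
      rcases mul_eq_zero.1 hrb with h' | h'
      · rw [hs, h'] at h; linarith
      · have hr' : r₀ < 0 := by rw [hs, h'] at h; simpa using h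
        have : c = -r₀ ^ 2 := by rw [ht, h'] at ht0'; linarith
        nlinarith [mul_pos (neg_pos.2 hr') (neg_pos.2 hr')]
    intro z hz
    rw [hfac z, mul_eq_zero] at hz
    rcases hz with hz | hz
    · rw [sub_eq_zero] at hz
      rw [hz]
      simpa using hr0
    · exact quad_root_re s t hs0 ht0 z hz

/-- Routh–Hurwitz type criterion for a real cubic with positive leading coefficient. -/
lemma cubic_halfplane' (a3 a2 a1 a0 : ℝ) (h3 : 0 < a3) :
    (∀ z : ℂ, (a3 : ℂ) * z ^ 3 + (a2 : ℂ) * z ^ 2 + (a1 : ℂ) * z + (a0 : ℂ) = 0 → z.re ≤ 0) ↔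
      (0 ≤ a2 ∧ 0 ≤ a1 ∧ 0 ≤ a0 ∧ a3 * a0 ≤ a2 * a1) := by
  have h3ℂ : (a3 : ℂ) ≠ 0 := Complex.ofReal_ne_zero.2 h3.ne'
  have key : ∀ z : ℂ, (a3 : ℂ) * (z ^ 3 + ((a2 / a3 : ℝ) : ℂ) * z ^ 2 + ((a1 / a3 : ℝ) : ℂ) * z
      + ((a0 / a3 : ℝ) : ℂ)) = (a3 : ℂ) * z ^ 3 + (a2 : ℂ) * z ^ 2 + (a1 : ℂ) * z + (a0 : ℂ) := by
    intro z; push_cast; field_simp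
  have hiff : (∀ z : ℂ, (a3 : ℂ) * z ^ 3 + (a2 : ℂ) * z ^ 2 + (a1 : ℂ) * z + (a0 : ℂ) = 0 → z.re ≤ 0)
      ↔ (∀ z : ℂ, z ^ 3 + ((a2 / a3 : ℝ) : ℂ) * z ^ 2 + ((a1 / a3 : ℝ) : ℂ) * z
        + ((a0 / a3 : ℝ) : ℂ) = 0 → z.re ≤ 0) := by
    apply forall_congr'
    intro z
    constructor
    · intro H h
      exact H (by rw [← key, h, mul_zero])
    · intro H h
      rw [← key, mul_eq_zero] at h
      exact H (h.resolve_left h3ℂ)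
  rw [hiff, cubic_halfplane]
  have e2 : 0 ≤ a2 / a3 ↔ 0 ≤ a2 := by rw [le_div_iff₀ h3, zero_mul]
  have e1 : 0 ≤ a1 / a3 ↔ 0 ≤ a1 := by rw [le_div_iff₀ h3, zero_mul]
  have e0 : 0 ≤ a0 / a3 ↔ 0 ≤ a0 := by rw [le_div_iff₀ h3, zero_mul]
  have e4 : a0 / a3 ≤ a2 / a3 * (a1 / a3) ↔ a3 * a0 ≤ a2 * a1 := by
    rw [div_mul_div_comm, div_le_div_iff₀ h3 (by positivity)]
    constructor <;> intro h <;> nlinarith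
  rw [e2, e1, e0, e4]

/-- Coefficients of `P_μ^m(z + 1/2)` as a cubic in `z`. -/
noncomputable def cA3 (m : ℕ) (μ : ℝ) : ℝ := ((m : ℝ) + 1) * ((m : ℝ) + 2) * ((m : ℝ) + 3) * μ ^ 3
noncomputable def cA2 (m : ℕ) (μ : ℝ) : ℝ :=
  3 / 2 * ((m : ℝ) + 1) * ((m : ℝ) + 2) * μ ^ 2 * (3 + ((m : ℝ) - 1) * μ)
noncomputable def cA1 (m : ℕ) (μ : ℝ) : ℝ :=
  ((m : ℝ) + 1) * μ * (13 / 2 + 9 / 2 * ((m : ℝ) - 1) * μ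
    + (3 * (m : ℝ) ^ 2 - 9 * (m : ℝ) - 2) / 4 * μ ^ 2)
noncomputable def cA0 (m : ℕ) (μ : ℝ) : ℝ :=
  3 + 13 / 4 * ((m : ℝ) - 1) * μ + 9 / 8 * (m : ℝ) * ((m : ℝ) - 3) * μ ^ 2
    + ((m : ℝ) ^ 3 - 6 * (m : ℝ) ^ 2 + 3 * (m : ℝ) + 2) / 8 * μ ^ 3

lemma cA0_eq_q (m : ℕ) (μ : ℝ) : cA0 m μ = qIV3 m μ := by
  simp only [cA0, qIV3, PIV3]; ring

lemma PIV3c_shift (m : ℕ) (μ : ℝ) (η : ℂ) :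
    PIV3c m μ η = (cA3 m μ : ℂ) * (η - ((1 / 2 : ℝ) : ℂ)) ^ 3
      + (cA2 m μ : ℂ) * (η - ((1 / 2 : ℝ) : ℂ)) ^ 2
      + (cA1 m μ : ℂ) * (η - ((1 / 2 : ℝ) : ℂ)) + (cA0 m μ : ℂ) := by
  simp only [PIV3c, cA3, cA2, cA1, cA0]
  push_cast
  ring

/-- The root localization reduced to sign conditions on the shifted coefficients. -/
lemma PIV3c_cond (m : ℕ) (μ : ℝ) (hμ : 0 < μ) :
    (∀ η : ℂ, PIV3c m μ η = 0 → η.re ≤ 1 / 2) ↔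
      (0 ≤ cA2 m μ ∧ 0 ≤ cA1 m μ ∧ 0 ≤ cA0 m μ ∧ cA3 m μ * cA0 m μ ≤ cA2 m μ * cA1 m μ) := by
  have h3 : 0 < cA3 m μ := by
    have h : (0:ℝ) < (m:ℝ) + 1 := by positivity
    simp only [cA3]
    positivity
  rw [← cubic_halfplane' _ _ _ _ h3]
  constructor
  · intro H z hz
    have hroot : PIV3c m μ (z + ((1 / 2 : ℝ) : ℂ)) = 0 := by
      rw [PIV3c_shift]
      have hz' : (z + ((1 / 2 : ℝ) : ℂ) - ((1 / 2 : ℝ) : ℂ)) = z := by ring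
      rw [hz']
      exact hz
    have := H _ hroot
    simp only [Complex.add_re, Complex.ofReal_re] at this
    linarith
  · intro H η hη
    have hroot := H (η - ((1 / 2 : ℝ) : ℂ)) (by rw [← PIV3c_shift]; exact hη)
    simp only [Complex.sub_re, Complex.ofReal_re] at hroot
    linarith

/-- For `m ≥ 6` all four sign conditions hold for every `μ > 0`. -/
lemma cond_of_six_le (m : ℕ) (hm : 6 ≤ m) (μ : ℝ) (hμ : 0 < μ) :
    0 ≤ cA2 m μ ∧ 0 ≤ cA1 m μ ∧ 0 ≤ cA0 m μ ∧ cA3 m μ * cA0 m μ ≤ cA2 m μ * cA1 m μ := by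
  have hm' : (6 : ℝ) ≤ (m : ℝ) := by exact_mod_cast hm
  have hm1 : (0:ℝ) ≤ (m:ℝ) + 1 := by linarith
  have hm2 : (0:ℝ) ≤ (m:ℝ) + 2 := by linarith
  have g2 : 0 ≤ cA2 m μ := by
    simp only [cA2]
    have h1 : (0:ℝ) ≤ 3 + ((m:ℝ) - 1) * μ := by nlinarith
    exact mul_nonneg (mul_nonneg (mul_nonneg (mul_nonneg (by norm_num) hm1) hm2)
      (sq_nonneg μ)) h1
  have g1 : 0 ≤ cA1 m μ := by
    simp only [cA1]
    have t1 : (0:ℝ) ≤ 9 / 2 * ((m:ℝ) - 1) * μ := by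
      exact mul_nonneg (by nlinarith) hμ.le
    have t2 : (0:ℝ) ≤ (3 * (m:ℝ) ^ 2 - 9 * (m:ℝ) - 2) / 4 * μ ^ 2 := by
      refine mul_nonneg (by nlinarith [sq_nonneg ((m:ℝ) - 6)]) (sq_nonneg μ)
    exact mul_nonneg (mul_nonneg hm1 hμ.le) (by linarith)
  have g0 : 0 ≤ cA0 m μ := by
    simp only [cA0]
    have t1 : (0:ℝ) ≤ 13 / 4 * ((m:ℝ) - 1) * μ := mul_nonneg (by nlinarith) hμ.le
    have t2 : (0:ℝ) ≤ 9 / 8 * (m:ℝ) * ((m:ℝ) - 3) * μ ^ 2 :=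
      mul_nonneg (by nlinarith) (sq_nonneg μ)
    have t3 : (0:ℝ) ≤ ((m:ℝ) ^ 3 - 6 * (m:ℝ) ^ 2 + 3 * (m:ℝ) + 2) / 8 * μ ^ 3 := by
      refine mul_nonneg ?_ (pow_nonneg hμ.le 3)
      nlinarith [mul_nonneg (mul_nonneg (by linarith : (0:ℝ) ≤ (m:ℝ)) (by linarith : (0:ℝ) ≤ (m:ℝ)))
        (by linarith : (0:ℝ) ≤ (m:ℝ) - 6)]
    linarith
  refine ⟨g2, g1, g0, ?_⟩
  have hiden : cA2 m μ * cA1 m μ - cA3 m μ * cA0 m μ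
      = 1 / 8 * ((m:ℝ) + 1) * ((m:ℝ) + 2) * μ ^ 3 *
        (6 * (35 * (m:ℝ) + 27) + 2 * (107 * (m:ℝ) ^ 2 - 26 * (m:ℝ) - 81) * μ
          + 36 * (2 * (m:ℝ) ^ 3 - 3 * (m:ℝ) ^ 2 - 2 * (m:ℝ) + 1) * μ ^ 2
          + 8 * (m:ℝ) * ((m:ℝ) - 1) * ((m:ℝ) ^ 2 - 2 * (m:ℝ) - 2) * μ ^ 3) := by
    simp only [cA3, cA2, cA1, cA0]; ring
  have hG : (0:ℝ) ≤ 6 * (35 * (m:ℝ) + 27) + 2 * (107 * (m:ℝ) ^ 2 - 26 * (m:ℝ) - 81) * μ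
      + 36 * (2 * (m:ℝ) ^ 3 - 3 * (m:ℝ) ^ 2 - 2 * (m:ℝ) + 1) * μ ^ 2
      + 8 * (m:ℝ) * ((m:ℝ) - 1) * ((m:ℝ) ^ 2 - 2 * (m:ℝ) - 2) * μ ^ 3 := by
    have u1 : (0:ℝ) ≤ 6 * (35 * (m:ℝ) + 27) := by linarith
    have u2 : (0:ℝ) ≤ 2 * (107 * (m:ℝ) ^ 2 - 26 * (m:ℝ) - 81) * μ :=
      mul_nonneg (by nlinarith [sq_nonneg ((m:ℝ) - 6)]) hμ.le
    have u3 : (0:ℝ) ≤ 36 * (2 * (m:ℝ) ^ 3 - 3 * (m:ℝ) ^ 2 - 2 * (m:ℝ) + 1) * μ ^ 2 := by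
      refine mul_nonneg ?_ (sq_nonneg μ)
      nlinarith [mul_nonneg (mul_nonneg (by linarith : (0:ℝ) ≤ (m:ℝ)) (by linarith : (0:ℝ) ≤ (m:ℝ)))
        (by linarith : (0:ℝ) ≤ (m:ℝ) - 6), sq_nonneg ((m:ℝ) - 6)]
    have u4 : (0:ℝ) ≤ 8 * (m:ℝ) * ((m:ℝ) - 1) * ((m:ℝ) ^ 2 - 2 * (m:ℝ) - 2) * μ ^ 3 := by
      refine mul_nonneg (mul_nonneg (mul_nonneg (by linarith) (by linarith)) ?_)
        (pow_nonneg hμ.le 3)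
      nlinarith [sq_nonneg ((m:ℝ) - 6)]
    linarith
  have : (0:ℝ) ≤ 1 / 8 * ((m:ℝ) + 1) * ((m:ℝ) + 2) * μ ^ 3 *
      (6 * (35 * (m:ℝ) + 27) + 2 * (107 * (m:ℝ) ^ 2 - 26 * (m:ℝ) - 81) * μ
        + 36 * (2 * (m:ℝ) ^ 3 - 3 * (m:ℝ) ^ 2 - 2 * (m:ℝ) + 1) * μ ^ 2
        + 8 * (m:ℝ) * ((m:ℝ) - 1) * ((m:ℝ) ^ 2 - 2 * (m:ℝ) - 2) * μ ^ 3) :=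
    mul_nonneg (mul_nonneg (mul_nonneg (mul_nonneg (by norm_num) hm1) hm2)
      (pow_nonneg hμ.le 3)) hG
  linarith

/-- Localization of the roots of `P_μ^m` for type `IV₃`: for `m ≥ 6` all roots
lie in `{Re η ≤ 1/2}` for every `μ > 0`; for `1 ≤ m ≤ 5` this holds iff
`0 < μ ≤ μ_m`, `μ_m` being the unique positive root of `q_m`. -/
theorem PIV3_roots_localization :
    (∀ m : ℕ, 6 ≤ m → ∀ μ : ℝ, 0 < μ →
      ∀ η : ℂ, PIV3c m μ η = 0 → η.re ≤ 1 / 2) ∧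
    (∀ m : ℕ, 1 ≤ m → m ≤ 5 → ∀ μm : ℝ, 0 < μm → qIV3 m μm = 0 →
      ∀ μ : ℝ, 0 < μ →
        ((∀ η : ℂ, PIV3c m μ η = 0 → η.re ≤ 1 / 2) ↔ μ ≤ μm)) := by
  constructor
  · intro m hm μ hμ
    exact (PIV3c_cond m μ hμ).2 (cond_of_six_le m hm μ hμ)
  · intro m hm1 hm5 μm hμm hq μ hμ
    rw [PIV3c_cond m μ hμ]
    interval_cases m
    · -- m = 1
      have e3 : cA3 1 μ = 24 * μ ^ 3 := by simp only [cA3]; push_cast; ring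
      have e2 : cA2 1 μ = 27 * μ ^ 2 := by simp only [cA2]; push_cast; ring
      have e1 : cA1 1 μ = 2 * μ * (13 / 2 - 2 * μ ^ 2) := by simp only [cA1]; push_cast; ring
      have e0 : cA0 1 μ = 3 - 9 / 4 * μ ^ 2 := by simp only [cA0]; push_cast; ring
      have hqm : 3 - 9 / 4 * μm ^ 2 = 0 := by
        rw [show (3 - 9/4*μm^2 : ℝ) = cA0 1 μm from by simp only [cA0]; push_cast; ring,
          cA0_eq_q]; exact hq
      rw [e3, e2, e1, e0]
      constructor
      · rintro ⟨-, -, h0, -⟩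
        by_contra h
        push_neg at h
        nlinarith [sq_nonneg (μ - μm), mul_pos (sub_pos.2 h) hμm]
      · intro hle
        have hbm : μm ≤ 6 / 5 := by nlinarith [sq_nonneg (μm - 6/5)]
        have hb : μ ≤ 6 / 5 := le_trans hle hbm
        have hsq : μ * μ ≤ μm * μm := mul_self_le_mul_self hμ.le hle
        refine ⟨by positivity, ?_, ?_, ?_⟩
        · have : (0:ℝ) ≤ 13 / 2 - 2 * μ ^ 2 := by nlinarith [mul_self_le_mul_self hμ.le hb]
          exact mul_nonneg (by positivity) this
        · nlinarith
        · nlinarith [mul_nonneg (mul_nonneg (mul_nonneg hμ.le hμ.le) hμ.le)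
            (show (0:ℝ) ≤ 279 - 54 * μ ^ 2 by nlinarith [mul_self_le_mul_self hμ.le hb])]
    · -- m = 2
      have e3 : cA3 2 μ = 60 * μ ^ 3 := by simp only [cA3]; push_cast; ring
      have e2 : cA2 2 μ = 18 * μ ^ 2 * (3 + μ) := by simp only [cA2]; push_cast; ring
      have e1 : cA1 2 μ = 3 * μ * (13 / 2 + 9 / 2 * μ - 2 * μ ^ 2) := by
        simp only [cA1]; push_cast; ring
      have e0 : cA0 2 μ = 3 + 13 / 4 * μ - 9 / 4 * μ ^ 2 - μ ^ 3 := by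
        simp only [cA0]; push_cast; ring
      have hqm : 3 + 13 / 4 * μm - 9 / 4 * μm ^ 2 - μm ^ 3 = 0 := by
        rw [show (3 + 13/4*μm - 9/4*μm^2 - μm^3 : ℝ) = cA0 2 μm from by
          simp only [cA0]; push_cast; ring, cA0_eq_q]; exact hq
      have key : (3 + 13 / 4 * μ - 9 / 4 * μ ^ 2 - μ ^ 3) * μm
          = (3 + 13 / 4 * μm - 9 / 4 * μm ^ 2 - μm ^ 3) * μ
            + 3 * (μm - μ) + 9 / 4 * (μ * μm) * (μm - μ) + (μ * μm) * (μm ^ 2 - μ ^ 2) := by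
        ring
      have hB : (3 + 13 / 4 * μm - 9 / 4 * μm ^ 2 - μm ^ 3) * μ = 0 := by rw [hqm, zero_mul]
      rw [e3, e2, e1, e0]
      constructor
      · rintro ⟨-, -, h0, -⟩
        by_contra h
        push_neg at h
        nlinarith [key, hB, mul_nonneg h0 hμm.le,
          mul_pos (mul_pos hμ hμm) (sub_pos.2 h),
          mul_pos (mul_pos (mul_pos hμ hμm) (add_pos hμ hμm)) (sub_pos.2 h)]
      · intro hle
        have hbm : μm ≤ 3 / 2 := by
          by_contra hb
          push_neg at hb
          nlinarith [mul_pos (sub_pos.2 hb) (sub_pos.2 hb),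
            mul_pos (mul_pos (sub_pos.2 hb) (sub_pos.2 hb)) (sub_pos.2 hb)]
        have hb : μ ≤ 3 / 2 := le_trans hle hbm
        have h0 : (0:ℝ) ≤ 3 + 13 / 4 * μ - 9 / 4 * μ ^ 2 - μ ^ 3 := by
          nlinarith [key, hB, hμm,
            mul_nonneg (mul_nonneg hμ.le hμm.le) (sub_nonneg.2 hle),
            mul_nonneg (mul_nonneg (mul_nonneg hμ.le hμm.le) (by linarith : (0:ℝ) ≤ μ + μm))
              (sub_nonneg.2 hle)]
        refine ⟨?_, ?_, h0, ?_⟩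
        · exact mul_nonneg (by positivity) (by linarith)
        · refine mul_nonneg (by positivity) ?_
          nlinarith [mul_le_mul_of_nonneg_left hb hμ.le]
        · have hin : (0:ℝ) ≤ 582 + 590 * μ + 36 * μ ^ 2 - 32 * μ ^ 3 := by
            nlinarith [pow_le_pow_left₀ hμ.le hb 3, sq_nonneg μ]
          nlinarith [mul_nonneg (mul_nonneg (mul_nonneg hμ.le hμ.le) hμ.le) hin, h0]
    · -- m = 3
      have e3 : cA3 3 μ = 120 * μ ^ 3 := by simp only [cA3]; push_cast; ring
      have e2 : cA2 3 μ = 30 * μ ^ 2 * (3 + 2 * μ) := by simp only [cA2]; push_cast; ring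
      have e1 : cA1 3 μ = 4 * μ * (13 / 2 + 9 * μ - 1 / 2 * μ ^ 2) := by
        simp only [cA1]; push_cast; ring
      have e0 : cA0 3 μ = 3 + 13 / 2 * μ - 2 * μ ^ 3 := by simp only [cA0]; push_cast; ring
      have hqm : 3 + 13 / 2 * μm - 2 * μm ^ 3 = 0 := by
        rw [show (3 + 13/2*μm - 2*μm^3 : ℝ) = cA0 3 μm from by
          simp only [cA0]; push_cast; ring, cA0_eq_q]; exact hq
      have key : (3 + 13 / 2 * μ - 2 * μ ^ 3) * μm ^ 3
          = (3 + 13 / 2 * μm - 2 * μm ^ 3) * μ ^ 3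
            + 3 * (μm ^ 3 - μ ^ 3) + 13 / 2 * (μ * μm) * (μm ^ 2 - μ ^ 2) := by
        ring
      have hB : (3 + 13 / 2 * μm - 2 * μm ^ 3) * μ ^ 3 = 0 := by rw [hqm, zero_mul]
      rw [e3, e2, e1, e0]
      constructor
      · rintro ⟨-, -, h0, -⟩
        by_contra h
        push_neg at h
        nlinarith [key, hB, mul_nonneg h0 (pow_nonneg hμm.le 3),
          mul_pos (mul_pos hμ hμm)
            (mul_pos (add_pos hμ hμm) (sub_pos.2 h)),
          mul_pos (mul_pos (sub_pos.2 h) (add_pos hμm hμ))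
            (mul_pos hμm hμ)]
      · intro hle
        have hbm : μm ≤ 2 := by
          by_contra hb
          push_neg at hb
          nlinarith [mul_pos (sub_pos.2 hb) (sub_pos.2 hb),
            mul_pos (mul_pos (sub_pos.2 hb) (sub_pos.2 hb)) (sub_pos.2 hb)]
        have hb : μ ≤ 2 := le_trans hle hbm
        have h0 : (0:ℝ) ≤ 3 + 13 / 2 * μ - 2 * μ ^ 3 := by
          nlinarith [key, hB, pow_pos hμm 3,
            pow_le_pow_left₀ hμ.le hle 3,
            mul_nonneg (mul_nonneg (mul_nonneg hμ.le hμm.le) (by linarith : (0:ℝ) ≤ μ + μm))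
              (sub_nonneg.2 hle)]
        refine ⟨?_, ?_, h0, ?_⟩
        · exact mul_nonneg (by positivity) (by linarith)
        · refine mul_nonneg (by positivity) ?_
          nlinarith [mul_le_mul_of_nonneg_left hb hμ.le]
        · have hin : (0:ℝ) ≤ 792 + 1608 * μ + 792 * μ ^ 2 + 48 * μ ^ 3 := by positivity
          nlinarith [mul_nonneg (mul_nonneg (mul_nonneg hμ.le hμ.le) hμ.le) hin, h0]
    · -- m = 4
      have e3 : cA3 4 μ = 210 * μ ^ 3 := by simp only [cA3]; push_cast; ring
      have e2 : cA2 4 μ = 45 * μ ^ 2 * (3 + 3 * μ) := by simp only [cA2]; push_cast; ring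
      have e1 : cA1 4 μ = 5 * μ * (13 / 2 + 27 / 2 * μ + 5 / 2 * μ ^ 2) := by
        simp only [cA1]; push_cast; ring
      have e0 : cA0 4 μ = 3 + 39 / 4 * μ + 9 / 2 * μ ^ 2 - 9 / 4 * μ ^ 3 := by
        simp only [cA0]; push_cast; ring
      have hqm : 3 + 39 / 4 * μm + 9 / 2 * μm ^ 2 - 9 / 4 * μm ^ 3 = 0 := by
        rw [show (3 + 39/4*μm + 9/2*μm^2 - 9/4*μm^3 : ℝ) = cA0 4 μm from by
          simp only [cA0]; push_cast; ring, cA0_eq_q]; exact hq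
      have key : (3 + 39 / 4 * μ + 9 / 2 * μ ^ 2 - 9 / 4 * μ ^ 3) * μm ^ 3
          = (3 + 39 / 4 * μm + 9 / 2 * μm ^ 2 - 9 / 4 * μm ^ 3) * μ ^ 3
            + 3 * (μm ^ 3 - μ ^ 3) + 39 / 4 * (μ * μm) * (μm ^ 2 - μ ^ 2)
            + 9 / 2 * (μ ^ 2 * μm ^ 2) * (μm - μ) := by
        ring
      have hB : (3 + 39 / 4 * μm + 9 / 2 * μm ^ 2 - 9 / 4 * μm ^ 3) * μ ^ 3 = 0 := by
        rw [hqm, zero_mul]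
      rw [e3, e2, e1, e0]
      constructor
      · rintro ⟨-, -, h0, -⟩
        by_contra h
        push_neg at h
        nlinarith [key, hB, mul_nonneg h0 (pow_nonneg hμm.le 3),
          mul_pos (mul_pos hμ hμm)
            (mul_pos (add_pos hμ hμm) (sub_pos.2 h)),
          mul_pos (mul_pos (sub_pos.2 h) (add_pos hμm hμ))
            (mul_pos hμm hμ),
          mul_pos (mul_pos (mul_pos hμ hμ) (mul_pos hμm hμm)) (sub_pos.2 h)]
      · intro hle
        have h0 : (0:ℝ) ≤ 3 + 39 / 4 * μ + 9 / 2 * μ ^ 2 - 9 / 4 * μ ^ 3 := by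
          nlinarith [key, hB, pow_pos hμm 3,
            pow_le_pow_left₀ hμ.le hle 3,
            mul_nonneg (mul_nonneg (mul_nonneg hμ.le hμm.le) (by linarith : (0:ℝ) ≤ μ + μm))
              (sub_nonneg.2 hle),
            mul_nonneg (mul_nonneg (mul_nonneg hμ.le hμ.le) (mul_nonneg hμm.le hμm.le))
              (sub_nonneg.2 hle)]
        refine ⟨?_, ?_, h0, ?_⟩
        · exact mul_nonneg (by positivity) (by linarith)
        · refine mul_nonneg (by positivity) (by positivity)
        · have hin : (0:ℝ) ≤ 1002 + 3054 * μ + 2628 * μ ^ 2 + 576 * μ ^ 3 := by positivity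
          nlinarith [mul_nonneg (mul_nonneg (mul_nonneg hμ.le hμ.le) hμ.le) hin, h0]
    · -- m = 5
      have e3 : cA3 5 μ = 336 * μ ^ 3 := by simp only [cA3]; push_cast; ring
      have e2 : cA2 5 μ = 63 * μ ^ 2 * (3 + 4 * μ) := by simp only [cA2]; push_cast; ring
      have e1 : cA1 5 μ = 6 * μ * (13 / 2 + 18 * μ + 7 * μ ^ 2) := by
        simp only [cA1]; push_cast; ring
      have e0 : cA0 5 μ = 3 + 13 * μ + 45 / 4 * μ ^ 2 - μ ^ 3 := by
        simp only [cA0]; push_cast; ring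
      have hqm : 3 + 13 * μm + 45 / 4 * μm ^ 2 - μm ^ 3 = 0 := by
        rw [show (3 + 13*μm + 45/4*μm^2 - μm^3 : ℝ) = cA0 5 μm from by
          simp only [cA0]; push_cast; ring, cA0_eq_q]; exact hq
      have key : (3 + 13 * μ + 45 / 4 * μ ^ 2 - μ ^ 3) * μm ^ 3
          = (3 + 13 * μm + 45 / 4 * μm ^ 2 - μm ^ 3) * μ ^ 3
            + 3 * (μm ^ 3 - μ ^ 3) + 13 * (μ * μm) * (μm ^ 2 - μ ^ 2)
            + 45 / 4 * (μ ^ 2 * μm ^ 2) * (μm - μ) := by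
        ring
      have hB : (3 + 13 * μm + 45 / 4 * μm ^ 2 - μm ^ 3) * μ ^ 3 = 0 := by
        rw [hqm, zero_mul]
      rw [e3, e2, e1, e0]
      constructor
      · rintro ⟨-, -, h0, -⟩
        by_contra h
        push_neg at h
        nlinarith [key, hB, mul_nonneg h0 (pow_nonneg hμm.le 3),
          mul_pos (mul_pos hμ hμm)
            (mul_pos (add_pos hμ hμm) (sub_pos.2 h)),
          mul_pos (mul_pos (sub_pos.2 h) (add_pos hμm hμ))
            (mul_pos hμm hμ),
          mul_pos (mul_pos (mul_pos hμ hμ) (mul_pos hμm hμm)) (sub_pos.2 h)]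
      · intro hle
        have h0 : (0:ℝ) ≤ 3 + 13 * μ + 45 / 4 * μ ^ 2 - μ ^ 3 := by
          nlinarith [key, hB, pow_pos hμm 3,
            pow_le_pow_left₀ hμ.le hle 3,
            mul_nonneg (mul_nonneg (mul_nonneg hμ.le hμm.le) (by linarith : (0:ℝ) ≤ μ + μm))
              (sub_nonneg.2 hle),
            mul_nonneg (mul_nonneg (mul_nonneg hμ.le hμ.le) (mul_nonneg hμm.le hμm.le))
              (sub_nonneg.2 hle)]
        refine ⟨?_, ?_, h0, ?_⟩
        · exact mul_nonneg (by positivity) (by linarith)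
        · refine mul_nonneg (by positivity) (by positivity)
        · have hin : (0:ℝ) ≤ 1212 + 4928 * μ + 5976 * μ ^ 2 + 2080 * μ ^ 3 := by positivity
          nlinarith [mul_nonneg (mul_nonneg (mul_nonneg hμ.le hμ.le) hμ.le) hin, h0]
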